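/- arXiv:1508.04732 — 2 statements merged into one kernel-verified Lean document; each statement's English description precedes it below -/
import Mathlib

section
/- If n ≥ 0 is even and a homogeneous quadratic Δ-cable rooted at θₙ⁽⁰⁾ = Σ_{i=0}^{n}(-1)ⁱxᵢx_{n-i} exists, then its first element above the root is uniquely determined and equals θₙ⁽¹⁾ = Σ_{i=1}^{n+1} (-1)^{i+1} i xᵢ x_{n+1-i}, i.e., Δ(Σ_{i=1}^{n+1} (-1)^{i+1} i xᵢ x_{n+1-i}) = Σ_{i=0}^{n}(-1)ⁱ xᵢ x_{n-i}. -/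
open MvPolynomial Finset

/-- The down operator `Δ` on `Ω = k[x₀, x₁, x₂, ...]`. -/
noncomputable def downOp (k : Type*) [Field k] [CharZero k] :
    Derivation k (MvPolynomial ℕ k) (MvPolynomial ℕ k) :=
  MvPolynomial.mkDerivation k (fun n => if n = 0 then 0 else X (n - 1))

/-- `θₙ⁽⁰⁾ = Σ_{i=0}^{n} (-1)ⁱ xᵢ x_{n-i}`. -/
noncomputable def theta0 (k : Type*) [Field k] [CharZero k] (n : ℕ) : MvPolynomial ℕ k :=
  ∑ i ∈ Finset.range (n + 1), (-1 : MvPolynomial ℕ k) ^ i * X i * X (n - i)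

/-- `θₙ⁽¹⁾ = Σ_{i=1}^{n+1} (-1)^{i+1} i xᵢ x_{n+1-i}` (reindexed with `i = j+1`). -/
noncomputable def theta1 (k : Type*) [Field k] [CharZero k] (n : ℕ) : MvPolynomial ℕ k :=
  ∑ j ∈ Finset.range (n + 1),
    (-1 : MvPolynomial ℕ k) ^ j * ((j + 1 : ℕ) : MvPolynomial ℕ k) * X (j + 1) * X (n - j)

/-- `Ω_{(2,m)}`, the span of the monomials `xᵢ x_{m-i}` for `0 ≤ i ≤ m`. -/
noncomputable def quadSpace (k : Type*) [Field k] [CharZero k] (m : ℕ) :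
    Submodule k (MvPolynomial ℕ k) :=
  Submodule.span k {p | ∃ i ≤ m, p = X i * X (m - i)}

section Helpers

variable {k : Type*} [Field k] [CharZero k]

lemma downOp_X (i : ℕ) : downOp k (X i) = if i = 0 then 0 else X (i - 1) :=
  MvPolynomial.mkDerivation_X k _ i

lemma downOp_XX (i j : ℕ) :
    downOp k (X i * X j) =
      (if i = 0 then 0 else X (i - 1) * X j) + (if j = 0 then 0 else X i * X (j - 1)) := by
  rw [Derivation.leibniz, downOp_X, downOp_X, smul_eq_mul, smul_eq_mul]
  split_ifs <;> ring

lemma downOp_sum (c : ℕ → k) (n : ℕ) :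
    downOp k (∑ i ∈ range (n + 2), c i • (X i * X (n + 1 - i))) =
      ∑ j ∈ range (n + 1), (c j + c (j + 1)) • (X j * X (n - j)) := by
  rw [map_sum]
  have h1 : ∀ i ∈ range (n + 2), downOp k (c i • (X i * X (n + 1 - i))) =
      c i • (if i = 0 then 0 else X (i - 1) * X (n + 1 - i)) +
      c i • (if n + 1 - i = 0 then 0 else X i * X (n - i)) := by
    intro i _
    rw [Derivation.map_smul, downOp_XX]
    have e : n + 1 - i - 1 = n - i := by omega
    rw [e, smul_add]
  rw [Finset.sum_congr rfl h1, Finset.sum_add_distrib]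
  have h2 : ∑ i ∈ range (n + 2),
      c i • (if i = 0 then 0 else X (i - 1) * X (n + 1 - i) : MvPolynomial ℕ k) =
      ∑ i ∈ range (n + 1), c (i + 1) • (X i * X (n - i)) := by
    rw [Finset.sum_range_succ']
    have hz : (if (0:ℕ) = 0 then (0 : MvPolynomial ℕ k) else X (0-1) * X (n+1-0)) = 0 := rfl
    rw [hz, smul_zero, add_zero]
    refine Finset.sum_congr rfl fun i _ => ?_
    have e : n + 1 - (i + 1) = n - i := by omega
    rw [if_neg (Nat.succ_ne_zero i), e, Nat.add_sub_cancel]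
  have h3 : ∑ i ∈ range (n + 2),
      c i • (if n + 1 - i = 0 then 0 else X i * X (n - i) : MvPolynomial ℕ k) =
      ∑ i ∈ range (n + 1), c i • (X i * X (n - i)) := by
    rw [Finset.sum_range_succ]
    have e : n + 1 - (n + 1) = 0 := by omega
    rw [e, if_pos rfl, smul_zero, add_zero]
    refine Finset.sum_congr rfl fun i hi => ?_
    rw [Finset.mem_range] at hi
    rw [if_neg (by omega)]
  rw [h2, h3, ← Finset.sum_add_distrib]
  refine Finset.sum_congr rfl fun i _ => ?_
  rw [← add_smul, add_comm (c (i + 1)) (c i)]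

lemma mem_quadSpace_rep {m : ℕ} {p : MvPolynomial ℕ k} (hp : p ∈ quadSpace k m) :
    ∃ c : ℕ → k, p = ∑ i ∈ range (m + 1), c i • (X i * X (m - i)) := by
  induction hp using Submodule.span_induction with
  | mem x hx =>
      obtain ⟨i, him, rfl⟩ := hx
      refine ⟨fun j => if j = i then 1 else 0, ?_⟩
      rw [Finset.sum_congr rfl (fun j _ => by rw [ite_smul, one_smul, zero_smul]),
        Finset.sum_ite_eq' (range (m + 1)) i (fun j => (X j * X (m - j) : MvPolynomial ℕ k)),
        if_pos (Finset.mem_range.mpr (by omega))]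
  | zero => exact ⟨0, by simp⟩
  | add x y hx hy ihx ihy =>
      obtain ⟨c, rfl⟩ := ihx
      obtain ⟨d, rfl⟩ := ihy
      exact ⟨c + d, by simp [add_smul, Finset.sum_add_distrib]⟩
  | smul a x hx ih =>
      obtain ⟨c, rfl⟩ := ih
      exact ⟨fun i => a * c i, by rw [Finset.smul_sum]; simp [smul_smul]⟩

lemma single_add_single_cases {u v a b : ℕ}
    (h : (Finsupp.single u 1 + Finsupp.single v 1 : ℕ →₀ ℕ) =
      Finsupp.single a 1 + Finsupp.single b 1) :
    u = a ∨ u = b := by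
  have h2 := DFunLike.congr_fun h u
  simp only [Finsupp.add_apply, Finsupp.single_apply] at h2
  split_ifs at h2 <;> omega

lemma single_pair_eq_iff {n j a : ℕ} (hj : j ≤ n) (ha : a ≤ n) :
    (Finsupp.single j 1 + Finsupp.single (n - j) 1 : ℕ →₀ ℕ) =
      Finsupp.single a 1 + Finsupp.single (n - a) 1 ↔ (j = a ∨ j = n - a) := by
  constructor
  · exact single_add_single_cases
  · rintro (rfl | rfl)
    · rfl
    · rw [Nat.sub_sub_self ha, add_comm]

omit [CharZero k] in
lemma XX_eq_monomial (i j : ℕ) :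
    (X i * X j : MvPolynomial ℕ k) =
      monomial (Finsupp.single i 1 + Finsupp.single j 1) 1 := by
  rw [X, X, monomial_mul, one_mul]

lemma rel_of_sum_eq_zero {n : ℕ} {d : ℕ → k}
    (H : ∑ j ∈ range (n + 1), d j • (X j * X (n - j)) = (0 : MvPolynomial ℕ k)) :
    ∀ a ≤ n, (if a = n - a then d a else d a + d (n - a)) = 0 := by
  intro a ha
  have h1 := congrArg (coeff (Finsupp.single a 1 + Finsupp.single (n - a) 1)) H
  rw [coeff_sum] at h1
  simp only [coeff_smul, coeff_zero, smul_eq_mul] at h1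
  have key : ∀ j ∈ range (n + 1),
      d j * coeff (Finsupp.single a 1 + Finsupp.single (n - a) 1)
        (X j * X (n - j) : MvPolynomial ℕ k) =
      if j = a ∨ j = n - a then d j else 0 := by
    intro j hj
    rw [Finset.mem_range] at hj
    rw [XX_eq_monomial, coeff_monomial]
    rw [if_congr (single_pair_eq_iff (by omega) ha) rfl rfl]
    split_ifs <;> simp
  rw [Finset.sum_congr rfl key] at h1
  by_cases hc : a = n - a
  · rw [if_pos hc]
    have : ∀ j ∈ range (n + 1), (if j = a ∨ j = n - a then d j else 0) =
        if j = a then d j else 0 := by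
      intro j _
      rw [← hc]
      exact if_congr or_self_iff rfl rfl
    rw [Finset.sum_congr rfl this, Finset.sum_ite_eq' (range (n + 1)) a d,
      if_pos (Finset.mem_range.mpr (by omega))] at h1
    exact h1
  · rw [if_neg hc]
    have : ∀ j ∈ range (n + 1), (if j = a ∨ j = n - a then d j else 0) =
        (if j = a then d j else 0) + (if j = n - a then d j else 0) := by
      intro j _
      split_ifs with h1' h2' h3' <;> simp_all
    rw [Finset.sum_congr rfl this, Finset.sum_add_distrib,
      Finset.sum_ite_eq' (range (n + 1)) a d,
      Finset.sum_ite_eq' (range (n + 1)) (n - a) d,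
      if_pos (Finset.mem_range.mpr (by omega)),
      if_pos (Finset.mem_range.mpr (by omega))] at h1
    exact h1

lemma quad_ker {m : ℕ} (c : ℕ → k)
    (H : downOp k (∑ i ∈ range (m + m + 2), c i • (X i * X (m + m + 1 - i))) = 0) :
    ∑ i ∈ range (m + m + 2), c i • (X i * X (m + m + 1 - i)) = (0 : MvPolynomial ℕ k) := by
  set n := m + m with hn
  rw [downOp_sum] at H
  have rel := rel_of_sum_eq_zero H
  set s : ℕ → k := fun a => c a + c (n + 1 - a) with hs
  have hsdef : ∀ a, s a = c a + c (n + 1 - a) := fun a => rfl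
  have hsm : s m = 0 := by
    have h := rel m (by omega)
    rw [if_pos (by omega)] at h
    have e : n + 1 - m = m + 1 := by omega
    rw [hsdef, e]
    exact h
  have step : ∀ a, a < m → s a = - s (a + 1) := by
    intro a haa
    have h := rel a (by omega)
    rw [if_neg (by omega)] at h
    have e1 : n + 1 - a = n - a + 1 := by omega
    have e2 : n + 1 - (a + 1) = n - a := by omega
    rw [hsdef, hsdef, e1, e2]
    linear_combination h
  have hza : ∀ t, s (m - t) = 0 := by
    intro t
    induction t with
    | zero => simpa using hsm
    | succ t ih =>
        by_cases h : t + 1 ≤ m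
        · have h1 : m - (t + 1) < m := by omega
          have h2 : m - (t + 1) + 1 = m - t := by omega
          rw [step _ h1, h2, ih, neg_zero]
        · have h2 : m - (t + 1) = m - t := by omega
          rw [h2]; exact ih
  have hsz : ∀ a ≤ n + 1, s a = 0 := by
    intro a ha
    by_cases h : a ≤ m
    · have := hza (m - a)
      rwa [Nat.sub_sub_self h] at this
    · have h1 : n + 1 - a ≤ m := by omega
      have h3 := hza (m - (n + 1 - a))
      rw [Nat.sub_sub_self h1] at h3
      have h2 : n + 1 - (n + 1 - a) = a := by omega
      rw [hsdef] at h3 ⊢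
      rw [h2] at h3
      linear_combination h3
  have hq : (2 : k) • (∑ i ∈ range (n + 2), c i • (X i * X (n + 1 - i) : MvPolynomial ℕ k)) = 0 := by
    rw [two_smul]
    have hrefl := Finset.sum_range_reflect
      (fun i => c i • (X i * X (n + 1 - i) : MvPolynomial ℕ k)) (n + 2)
    nth_rewrite 2 [← hrefl]
    rw [← Finset.sum_add_distrib]
    have hz : ∀ i ∈ range (n + 2),
        (c i • (X i * X (n + 1 - i) : MvPolynomial ℕ k) +
          c (n + 2 - 1 - i) • (X (n + 2 - 1 - i) * X (n + 1 - (n + 2 - 1 - i)))) = 0 := by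
      intro i hi
      rw [Finset.mem_range] at hi
      have e1 : n + 2 - 1 - i = n + 1 - i := by omega
      have e2 : n + 1 - (n + 1 - i) = i := by omega
      rw [e1, e2, mul_comm (X (n + 1 - i)) (X i), ← add_smul]
      have hsi := hsz i (by omega)
      rw [hsdef] at hsi
      rw [hsi, zero_smul]
    rw [Finset.sum_congr rfl hz, Finset.sum_const_zero]
  rcases smul_eq_zero.mp hq with h | h
  · exact absurd h two_ne_zero
  · exact h

lemma theta1_rep (n : ℕ) :
    theta1 k n = ∑ i ∈ range (n + 2),
      ((-1 : k) ^ (i - 1) * i) • (X i * X (n + 1 - i)) := by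
  rw [Finset.sum_range_succ']
  simp only [Nat.cast_zero, mul_zero, zero_smul, add_zero, Nat.add_sub_cancel]
  rw [theta1]
  refine Finset.sum_congr rfl fun j _ => ?_
  have e : n + 1 - (j + 1) = n - j := by omega
  rw [e, smul_eq_C_mul, map_mul, map_pow, map_neg, map_one, map_natCast]
  ring

lemma theta0_rep (n : ℕ) :
    theta0 k n = ∑ j ∈ range (n + 1), ((-1 : k) ^ j) • (X j * X (n - j)) := by
  rw [theta0]
  refine Finset.sum_congr rfl fun j _ => ?_
  rw [smul_eq_C_mul, map_pow, map_neg, map_one]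
  ring

lemma downOp_theta1 (n : ℕ) : downOp k (theta1 k n) = theta0 k n := by
  rw [theta1_rep, downOp_sum, theta0_rep]
  refine Finset.sum_congr rfl fun j _ => ?_
  congr 1
  rcases j with _ | j
  · norm_num
  · have e : j + 1 - 1 = j := rfl
    rw [e]
    push_cast
    rw [pow_succ]
    ring

end Helpers

/-- For even `n`, the first element above the root of any homogeneous quadratic `Δ`-cable
rooted at `θₙ⁽⁰⁾` is uniquely determined and equals `θₙ⁽¹⁾`. -/
theorem theta1_unique (k : Type*) [Field k] [CharZero k] :
    ∀ n : ℕ, Even n →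
      downOp k (theta1 k n) = theta0 k n ∧
      ∀ p ∈ quadSpace k (n + 1), downOp k p = theta0 k n → p = theta1 k n := by
  intro n hn
  refine ⟨downOp_theta1 n, fun p hp hΔ => ?_⟩
  obtain ⟨m, hm⟩ := hn
  obtain ⟨c, hc⟩ := mem_quadSpace_rep hp
  have hrep : p - theta1 k n = ∑ i ∈ range (n + 2),
      (c i - (-1 : k) ^ (i - 1) * i) • (X i * X (n + 1 - i)) := by
    rw [hc, theta1_rep]
    rw [← Finset.sum_sub_distrib]
    refine Finset.sum_congr rfl fun i _ => ?_
    rw [sub_smul]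
  have hker : downOp k (p - theta1 k n) = 0 := by
    rw [map_sub, hΔ, downOp_theta1, sub_self]
  rw [hrep] at hker
  have := quad_ker (k := k) (m := m)
    (fun i => c i - (-1 : k) ^ (i - 1) * i) (by rw [← hm]; exact hker)
  rw [← hm] at this
  rw [← hrep] at this
  exact sub_eq_zero.mp this
end

section
/- For each integer r ≥ 1 and even n ≥ 2, the r-th graded piece Ω_r of Ω (polynomials homogeneous of total degree r in the variables xᵢ) is contained in (x₀,...,x_{n/2 - 1})^{r-1} + Qₙ, where Qₙ is the fundamental Q-ideal. -/
open MvPolynomial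

namespace QProofAux

open Finset

variable {k : Type*} [Field k] [CharZero k]

/-- exponent vector of `X a * X b` -/
noncomputable def D (a b : ℕ) : ℕ →₀ ℕ := Finsupp.single a 1 + Finsupp.single b 1

lemma pair_eq {i j a b : ℕ} : D i j = D a b ↔ (i = a ∧ j = b) ∨ (i = b ∧ j = a) := by
  unfold D
  rw [Finsupp.single_add_single_eq_single_add_single (one_ne_zero) (one_ne_zero)]
  simp

lemma XX_eq_monomial (u v : ℕ) : (X u * X v : MvPolynomial ℕ k) = monomial (D u v) 1 := by
  unfold D
  rw [X, X, monomial_mul, mul_one]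

lemma coeff_XX (a b u v : ℕ) :
    coeff (D a b) (X u * X v : MvPolynomial ℕ k)
      = if (u = a ∧ v = b) ∨ (u = b ∧ v = a) then 1 else 0 := by
  rw [XX_eq_monomial, coeff_monomial]
  simp only [pair_eq]

lemma downOp_X (i : ℕ) :
    downOp k (X i) = if i = 0 then 0 else X (i - 1) := by
  rw [downOp, mkDerivation_X]

lemma downOp_XX (i j : ℕ) :
    downOp k (X i * X j) =
      (if i = 0 then 0 else X (i - 1) * X j) + (if j = 0 then 0 else X i * X (j - 1)) := by
  rw [Derivation.leibniz, downOp_X, downOp_X]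
  split_ifs <;> simp [smul_eq_mul] <;> ring

/-- span of `xᵢ x_{s-i}` for `i < h` -/
noncomputable def lowSpan (k : Type*) [Field k] [CharZero k] (h s : ℕ) :
    Submodule k (MvPolynomial ℕ k) :=
  Submodule.span k {p | ∃ i < h, p = X i * X (s - i)}

lemma mem_quadSpace {i s : ℕ} (hi : i ≤ s) :
    (X i * X (s - i) : MvPolynomial ℕ k) ∈ quadSpace k s :=
  Submodule.subset_span ⟨i, hi, rfl⟩

lemma quad_rep {s : ℕ} {q : MvPolynomial ℕ k} (hq : q ∈ quadSpace k s) :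
    q = ∑ i ∈ range (s / 2 + 1), coeff (D i (s - i)) q • (X i * X (s - i)) := by
  induction hq using Submodule.span_induction with
  | mem x hx =>
      obtain ⟨j, hj, rfl⟩ := hx
      have h2j' : 2 * min j (s - j) ≤ s := by omega
      set j' := min j (s - j) with hj'
      have hgen : (X j * X (s - j) : MvPolynomial ℕ k) = X j' * X (s - j') := by
        rcases le_or_gt j (s - j) with hc | hc
        · rw [hj', min_eq_left hc]
        · have h1 : j' = s - j := by omega
          rw [h1, show s - (s - j) = j by omega, mul_comm]
      rw [hgen]
      have key : ∀ i ∈ range (s / 2 + 1),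
          coeff (D i (s - i)) (X j' * X (s - j') : MvPolynomial ℕ k)
              • (X i * X (s - i) : MvPolynomial ℕ k)
            = (if i = j' then (1 : k) else 0) • (X i * X (s - i) : MvPolynomial ℕ k) := by
        intro i hi
        simp only [mem_range] at hi
        have h2i : 2 * i ≤ s := by omega
        have hiff : ((j' = i ∧ s - j' = s - i) ∨ (j' = s - i ∧ s - j' = i)) ↔ i = j' :=
          ⟨fun hcond => by omega, fun hcond => by omega⟩
        rw [coeff_XX]
        simp only [hiff]
      rw [Finset.sum_congr rfl key]
      simp only [ite_smul, one_smul, zero_smul]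
      rw [Finset.sum_ite_eq' (range (s / 2 + 1)) j'
        (fun i => (X i * X (s - i) : MvPolynomial ℕ k))]
      rw [if_pos (mem_range.mpr (by omega))]
  | zero => simp
  | add x y hx hy ihx ihy =>
      simp only [coeff_add, add_smul, Finset.sum_add_distrib]
      rw [← ihx, ← ihy]
  | smul a x hx ihx =>
      conv_lhs => rw [ihx]
      rw [Finset.smul_sum]
      exact Finset.sum_congr rfl fun i _ => by rw [coeff_smul, smul_eq_mul, ← smul_smul]

lemma quad_rep' {s : ℕ} {q : MvPolynomial ℕ k} (hq : q ∈ quadSpace k s) :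
    ∃ c : ℕ → k, q = ∑ i ∈ range (s / 2 + 1), c i • (X i * X (s - i)) :=
  ⟨_, quad_rep hq⟩

lemma coeff_D_down (s a i : ℕ) (ha : 2 * a + 1 ≤ s) (hi : 2 * i ≤ s) :
    coeff (D a (s - 1 - a)) (downOp k (X i * X (s - i)) : MvPolynomial ℕ k)
      = (if i = a then 1 else 0)
        + (if i = a + 1 then (if s = 2 * a + 2 then 2 else 1) else 0) := by
  have hsi : ¬(s - i = 0) := by omega
  rw [downOp_XX, if_neg hsi, coeff_add]
  by_cases h0 : i = 0
  · rw [if_pos h0, coeff_zero, coeff_XX]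
    split_ifs <;> first | (exfalso; omega) | norm_num
  · rw [if_neg h0, coeff_XX, coeff_XX]
    split_ifs <;> first | (exfalso; omega) | norm_num

lemma coeff_D_down_sum {s : ℕ} (c : ℕ → k) (a : ℕ) (ha : 2 * a + 1 ≤ s) :
    coeff (D a (s - 1 - a))
        (downOp k (∑ i ∈ range (s / 2 + 1), c i • (X i * X (s - i)))) =
      c a + (if 2 * (a + 1) ≤ s then (if s = 2 * a + 2 then (2 : k) else 1) * c (a + 1)
        else 0) := by
  rw [map_sum, coeff_sum]
  have key : ∀ i ∈ range (s / 2 + 1),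
      coeff (D a (s - 1 - a)) ((downOp k) (c i • (X i * X (s - i))))
        = (if i = a then c i else 0)
          + (if i = a + 1 then c i * (if s = 2 * a + 2 then 2 else 1) else 0) := by
    intro i hi
    simp only [mem_range] at hi
    rw [Derivation.map_smul, coeff_smul, smul_eq_mul, coeff_D_down s a i ha (by omega)]
    split_ifs <;> ring
  rw [Finset.sum_congr rfl key, Finset.sum_add_distrib,
    Finset.sum_ite_eq' (range (s / 2 + 1)) a c,
    Finset.sum_ite_eq' (range (s / 2 + 1)) (a + 1)
      (fun i => c i * (if s = 2 * a + 2 then 2 else 1))]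
  rw [if_pos (mem_range.mpr (by omega))]
  congr 1
  by_cases hm : a + 1 ∈ range (s / 2 + 1)
  · rw [if_pos hm, if_pos (show 2 * (a + 1) ≤ s by simp only [mem_range] at hm; omega)]
    ring
  · rw [if_neg hm, if_neg (show ¬ 2 * (a + 1) ≤ s by simp only [mem_range] at hm; omega)]

lemma neg_one_pow_mul_self {R : Type*} [CommRing R] (i : ℕ) :
    ((-1 : R)) ^ i * (-1) ^ i = 1 := by
  rw [← pow_add]
  exact Even.neg_one_pow ⟨i, rfl⟩

lemma theta0_odd {s : ℕ} (hs : Odd s) : theta0 k s = 0 := by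
  have hrefl := Finset.sum_range_reflect
    (fun i => ((-1 : MvPolynomial ℕ k)) ^ i * X i * X (s - i)) (s + 1)
  have hmir : ∀ j ∈ range (s + 1),
      ((-1 : MvPolynomial ℕ k)) ^ (s + 1 - 1 - j) * X (s + 1 - 1 - j) * X (s - (s + 1 - 1 - j))
        = -(((-1 : MvPolynomial ℕ k)) ^ j * X j * X (s - j)) := by
    intro j hj
    simp only [mem_range] at hj
    have e1 : s + 1 - 1 - j = s - j := by omega
    have e2 : s - (s - j) = j := by omega
    have e3 : ((-1 : MvPolynomial ℕ k)) ^ (s - j) = -((-1) ^ j) := by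
      have h1 : ((-1 : MvPolynomial ℕ k)) ^ (s - j) * (-1) ^ j = (-1) ^ s := by
        rw [← pow_add]
        congr 1
        omega
      have h2 : ((-1 : MvPolynomial ℕ k)) ^ s = -1 := Odd.neg_one_pow hs
      calc ((-1 : MvPolynomial ℕ k)) ^ (s - j)
          = (-1) ^ (s - j) * ((-1) ^ j * (-1) ^ j) := by rw [neg_one_pow_mul_self, mul_one]
        _ = ((-1) ^ (s - j) * (-1) ^ j) * (-1) ^ j := by ring
        _ = (-1) ^ s * (-1) ^ j := by rw [h1]
        _ = -((-1) ^ j) := by rw [h2]; ring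
    rw [e1, e2, e3]
    ring
  rw [Finset.sum_congr rfl hmir, Finset.sum_neg_distrib] at hrefl
  have h2 : (2 : k) • theta0 k s = 0 := by
    rw [theta0, two_smul]
    nth_rewrite 1 [← hrefl]
    abel
  rcases smul_eq_zero.mp h2 with h | h
  · exact absurd h two_ne_zero
  · exact h

lemma theta0_even_rep (t : ℕ) :
    theta0 k (2 * t) = ∑ i ∈ range (t + 1),
      (if i = t then ((-1 : k)) ^ t else 2 * (-1) ^ i) • (X i * X (2 * t - i)) := by
  have hterm : ∀ i : ℕ,
      ((-1 : MvPolynomial ℕ k)) ^ i * X i * X (2 * t - i)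
        = ((-1 : k)) ^ i • (X i * X (2 * t - i)) := by
    intro i
    rw [smul_eq_C_mul, map_pow, map_neg, map_one]
    ring
  set f : ℕ → MvPolynomial ℕ k := fun i => ((-1 : k)) ^ i • (X i * X (2 * t - i)) with hf
  have hth : theta0 k (2 * t) = ∑ i ∈ range (2 * t + 1), f i := by
    rw [theta0]
    exact Finset.sum_congr rfl fun i _ => hterm i
  have hsplit : (2 : ℕ) * t + 1 = (t + 1) + t := by omega
  rw [hth, hsplit, Finset.sum_range_add]
  have hrefl : ∑ i ∈ range t, f (t + 1 + i) = ∑ i ∈ range t, f i := by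
    rw [← Finset.sum_range_reflect (fun i => f (t + 1 + i)) t]
    apply Finset.sum_congr rfl
    intro j hj
    simp only [mem_range] at hj
    have e1 : t + 1 + (t - 1 - j) = 2 * t - j := by omega
    rw [e1, hf]
    simp only
    have e2 : 2 * t - (2 * t - j) = j := by omega
    have e3 : ((-1 : k)) ^ (2 * t - j) = (-1) ^ j := by
      have h1 : ((-1 : k)) ^ (2 * t - j) * (-1) ^ j = 1 := by
        rw [← pow_add, (show 2 * t - j + j = 2 * t by omega)]
        exact Even.neg_one_pow ⟨t, by ring⟩
      calc ((-1 : k)) ^ (2 * t - j)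
          = (-1) ^ (2 * t - j) * ((-1) ^ j * (-1) ^ j) := by
            rw [neg_one_pow_mul_self, mul_one]
        _ = ((-1) ^ (2 * t - j) * (-1) ^ j) * (-1) ^ j := by ring
        _ = (-1) ^ j := by rw [h1, one_mul]
    rw [e2, e3, mul_comm (X (2 * t - j)) (X j)]
  rw [hrefl, Finset.sum_range_succ, Finset.sum_range_succ, if_pos rfl]
  have hlow : ∀ i ∈ range t,
      (if i = t then ((-1 : k)) ^ t else 2 * (-1) ^ i) • (X i * X (2 * t - i) : MvPolynomial ℕ k)
        = f i + f i := by
    intro i hi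
    simp only [mem_range] at hi
    rw [if_neg (by omega), hf]
    simp only
    rw [← add_smul]
    congr 1
    ring
  rw [Finset.sum_congr rfl hlow, Finset.sum_add_distrib]
  abel

lemma lowSpan_coeff {h t : ℕ} {f : MvPolynomial ℕ k} (hf : f ∈ lowSpan k h t)
    {a : ℕ} (ha : h ≤ a) (h2 : 2 * a ≤ t) : coeff (D a (t - a)) f = 0 := by
  induction hf using Submodule.span_induction with
  | mem x hx =>
      obtain ⟨i, hi, rfl⟩ := hx
      rw [coeff_XX, if_neg (by omega)]
  | zero => simp
  | add x y hx hy ihx ihy => simp [ihx, ihy]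
  | smul c x hx ih => simp [coeff_smul, ih]

lemma keyL {h s : ℕ} (hh : 1 ≤ h) {q : MvPolynomial ℕ k} (hq : q ∈ quadSpace k s)
    (hΔ : ∀ a, h ≤ a → 2 * a + 1 ≤ s → coeff (D a (s - 1 - a)) (downOp k q) = 0) :
    q ∈ lowSpan k h s ⊔ Submodule.span k {theta0 k s} := by
  obtain ⟨c, hrep⟩ := quad_rep' hq
  have hrec : ∀ a, h ≤ a → 2 * a + 1 ≤ s →
      c a + (if 2 * (a + 1) ≤ s then (if s = 2 * a + 2 then (2 : k) else 1) * c (a + 1) else 0)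
        = 0 := by
    intro a ha h2
    have h0 := hΔ a ha h2
    rw [hrep, coeff_D_down_sum c a h2] at h0
    exact h0
  by_cases hht : s / 2 < h
  · apply Submodule.mem_sup_left
    rw [hrep]
    refine Submodule.sum_mem _ fun i hi => ?_
    simp only [mem_range] at hi
    exact Submodule.smul_mem _ _ (Submodule.subset_span ⟨i, by omega, rfl⟩)
  push_neg at hht
  rcases Nat.even_or_odd s with hse | hso
  · -- even case
    obtain ⟨t, hts⟩ : ∃ t, s = 2 * t := by
      obtain ⟨u, hu⟩ := hse; exact ⟨u, by omega⟩
    have hst : s / 2 = t := by omega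
    have hval : ∀ d a, a + (d + 1) = t → h ≤ a →
        c a = (-1 : k) ^ (d + 1) * (2 * c t) := by
      intro d
      induction d with
      | zero =>
          intro a hat ha
          have h1 := hrec a ha (by omega)
          rw [if_pos (show 2 * (a + 1) ≤ s by omega),
            if_pos (show s = 2 * a + 2 by omega), show a + 1 = t by omega] at h1
          rw [pow_one]
          linear_combination h1
      | succ d ih =>
          intro a hat ha
          have h1 := hrec a ha (by omega)
          rw [if_pos (show 2 * (a + 1) ≤ s by omega),
            if_neg (show ¬ s = 2 * a + 2 by omega), one_mul] at h1
          rw [ih (a + 1) (by omega) (by omega)] at h1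
          rw [pow_succ]
          linear_combination h1
    set lam : k := (-1 : k) ^ t * c t with hlam
    have hlow : q - lam • theta0 k s ∈ lowSpan k h s := by
      have htr : theta0 k s = ∑ i ∈ range (t + 1),
          (if i = t then ((-1 : k)) ^ t else 2 * (-1) ^ i) • (X i * X (s - i)) := by
        rw [hts]
        exact theta0_even_rep t
      rw [hrep, hst, htr, Finset.smul_sum, ← Finset.sum_sub_distrib]
      refine Submodule.sum_mem _ fun i hi => ?_
      simp only [mem_range] at hi
      rw [smul_smul, ← sub_smul]
      by_cases hih : i < h
      · exact Submodule.smul_mem _ _ (Submodule.subset_span ⟨i, hih, rfl⟩)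
      · have hcoef : c i - lam * (if i = t then ((-1 : k)) ^ t else 2 * (-1) ^ i) = 0 := by
          by_cases hit : i = t
          · subst hit
            rw [if_pos rfl, hlam]
            linear_combination (-(c i)) * neg_one_pow_mul_self (R := k) i
          · have hd := hval (t - i - 1) i (by omega) (by omega)
            rw [show t - i - 1 + 1 = t - i by omega] at hd
            rw [if_neg hit, hd, hlam]
            have hpi : (-1 : k) ^ t = (-1) ^ (t - i) * (-1) ^ i := by
              rw [← pow_add, Nat.sub_add_cancel (show i ≤ t by omega)]
            rw [hpi]
            linear_combination (-(2 * c t * (-1 : k) ^ (t - i))) *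
              neg_one_pow_mul_self (R := k) i
        rw [hcoef, zero_smul]
        exact zero_mem _
    have hq2 : q = (q - lam • theta0 k s) + lam • theta0 k s := by abel
    rw [hq2]
    exact Submodule.add_mem _ (Submodule.mem_sup_left hlow)
      (Submodule.mem_sup_right (Submodule.smul_mem _ _ (Submodule.subset_span rfl)))
  · -- odd case
    obtain ⟨t, hts⟩ := hso
    have hst : s / 2 = t := by omega
    have hzero : ∀ d a, a + d = t → h ≤ a → c a = 0 := by
      intro d
      induction d with
      | zero =>
          intro a hat ha
          have h1 := hrec a ha (by omega)
          rw [if_neg (by omega)] at h1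
          simpa using h1
      | succ d ih =>
          intro a hat ha
          have h1 := hrec a ha (by omega)
          rw [if_pos (by omega), if_neg (by omega)] at h1
          rw [ih (a + 1) (by omega) (by omega)] at h1
          simpa using h1
    apply Submodule.mem_sup_left
    rw [hrep]
    refine Submodule.sum_mem _ fun i hi => ?_
    simp only [mem_range] at hi
    by_cases hih : i < h
    · exact Submodule.smul_mem _ _ (Submodule.subset_span ⟨i, hih, rfl⟩)
    · rw [hzero (t - i) i (by omega) (by omega), zero_smul]
      exact zero_mem _

section Cables

variable (θ : ℕ → ℕ → MvPolynomial ℕ k) (n : ℕ)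

/-- span of the vertices `θ m (s - m)` of degree `s` -/
noncomputable def QdegSpan (s : ℕ) : Submodule k (MvPolynomial ℕ k) :=
  Submodule.span k {p | ∃ m, Even m ∧ n ≤ m ∧ m ≤ s ∧ p = θ m (s - m)}

variable {θ n}
variable (hroot : ∀ m : ℕ, Even m → θ m 0 = theta0 k m)
  (hcable : ∀ m : ℕ, Even m → ∀ j : ℕ, downOp k (θ m (j + 1)) = θ m j)
  (hhom : ∀ m : ℕ, Even m → ∀ j : ℕ, θ m j ∈ quadSpace k (m + j))

include hhom in
lemma QdegSpan_le_quad (s : ℕ) : QdegSpan θ n s ≤ quadSpace k s := by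
  refine Submodule.span_le.mpr ?_
  rintro x ⟨m, hme, hnm, hms, rfl⟩
  have := hhom m hme (s - m)
  rwa [Nat.add_sub_cancel' hms] at this

include hcable in
lemma QdegSpan_lift {s : ℕ} {g : MvPolynomial ℕ k} (hg : g ∈ QdegSpan θ n s) :
    ∃ g', g' ∈ QdegSpan θ n (s + 1) ∧ downOp k g' = g := by
  induction hg using Submodule.span_induction with
  | mem x hx =>
      obtain ⟨m, hme, hnm, hms, rfl⟩ := hx
      refine ⟨θ m (s + 1 - m), Submodule.subset_span ⟨m, hme, hnm, by omega, rfl⟩, ?_⟩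
      rw [show s + 1 - m = (s - m) + 1 by omega]
      exact hcable m hme (s - m)
  | zero => exact ⟨0, zero_mem _, map_zero _⟩
  | add x y hx hy ihx ihy =>
      obtain ⟨gx, hgx, hdx⟩ := ihx
      obtain ⟨gy, hgy, hdy⟩ := ihy
      exact ⟨gx + gy, add_mem hgx hgy, by rw [map_add, hdx, hdy]⟩
  | smul a x hx ih =>
      obtain ⟨gx, hgx, hdx⟩ := ih
      exact ⟨a • gx, Submodule.smul_mem _ _ hgx, by rw [Derivation.map_smul, hdx]⟩

include hroot in
lemma theta0_span_le {m : ℕ} (hnm : n ≤ m) :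
    Submodule.span k {theta0 k m} ≤ QdegSpan θ n m := by
  rw [Submodule.span_le, Set.singleton_subset_iff]
  rcases Nat.even_or_odd m with hme | hmo
  · exact Submodule.subset_span ⟨m, hme, hnm, le_rfl, by rw [Nat.sub_self, hroot m hme]⟩
  · rw [SetLike.mem_coe, theta0_odd hmo]
    exact zero_mem _

include hroot hcable hhom in
lemma stepA (hne : Even n) (hn2 : 2 ≤ n) :
    ∀ s, n ≤ s → quadSpace k s ≤ lowSpan k (n / 2) s ⊔ QdegSpan θ n s := by
  obtain ⟨u, hu⟩ := hne
  have hh : 1 ≤ n / 2 := by omega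
  intro s hns
  induction s, hns using Nat.le_induction with
  | base =>
      refine Submodule.span_le.mpr ?_
      rintro x ⟨j, hj, rfl⟩
      simp only [SetLike.mem_coe]
      have hq : (X j * X (n - j) : MvPolynomial ℕ k) ∈ quadSpace k n := mem_quadSpace hj
      have hkey := keyL hh hq (fun a ha h2a => absurd h2a (by omega))
      exact sup_le_sup (le_refl _) (theta0_span_le hroot (le_refl n)) hkey
  | succ s hs ih =>
      refine Submodule.span_le.mpr ?_
      rintro x ⟨a0, ha0, rfl⟩
      simp only [SetLike.mem_coe]
      have h2m : 2 * min a0 (s + 1 - a0) ≤ s + 1 := by omega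
      set a := min a0 (s + 1 - a0) with hadef
      have hgen : (X a0 * X (s + 1 - a0) : MvPolynomial ℕ k) = X a * X (s + 1 - a) := by
        rcases le_or_gt a0 (s + 1 - a0) with hc | hc
        · rw [hadef, min_eq_left hc]
        · have h1 : a = s + 1 - a0 := by omega
          rw [h1, show s + 1 - (s + 1 - a0) = a0 by omega, mul_comm]
      rw [hgen]
      by_cases hlowc : a < n / 2
      · exact Submodule.mem_sup_left (Submodule.subset_span ⟨a, hlowc, rfl⟩)
      push_neg at hlowc
      have hdp : downOp k (X a * X (s + 1 - a) : MvPolynomial ℕ k)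
          = X (a - 1) * X (s - (a - 1)) + X a * X (s - a) := by
        rw [downOp_XX, if_neg (by omega), if_neg (by omega),
          show s + 1 - a = s - (a - 1) by omega, show s - (a - 1) - 1 = s - a by omega]
      have hdq : downOp k (X a * X (s + 1 - a) : MvPolynomial ℕ k) ∈ quadSpace k s := by
        rw [hdp]
        exact add_mem (mem_quadSpace (by omega)) (mem_quadSpace (by omega))
      obtain ⟨f, hf, g, hg, hfg⟩ := Submodule.mem_sup.mp (ih hdq)
      obtain ⟨g', hg', hdg'⟩ := QdegSpan_lift hcable hg
      have hqmem : (X a * X (s + 1 - a) : MvPolynomial ℕ k) - g' ∈ quadSpace k (s + 1) :=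
        sub_mem (by
          have : (X a * X (s + 1 - a) : MvPolynomial ℕ k) = X a * X (s + 1 - a) := rfl
          exact mem_quadSpace (by omega)) (QdegSpan_le_quad hhom (s + 1) hg')
      have hdqf : downOp k ((X a * X (s + 1 - a) : MvPolynomial ℕ k) - g') = f := by
        rw [map_sub, hdg', ← hfg]
        abel
      have hkey := keyL hh hqmem (fun b hb h2b => by
        rw [hdqf]
        exact lowSpan_coeff hf hb (by omega))
      have hfin : ((X a * X (s + 1 - a) : MvPolynomial ℕ k) - g') + g'
          ∈ lowSpan k (n / 2) (s + 1) ⊔ QdegSpan θ n (s + 1) :=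
        add_mem
          ((sup_le_sup (le_refl _) (theta0_span_le hroot (by omega))) hkey)
          (Submodule.mem_sup_right hg')
      simpa using hfin

end Cables

lemma prod_mem_pow {I : Ideal (MvPolynomial ℕ k)} :
    ∀ t : Multiset ℕ, (∀ i ∈ t, (X i : MvPolynomial ℕ k) ∈ I) →
      (t.map (X : ℕ → MvPolynomial ℕ k)).prod ∈ I ^ Multiset.card t := by
  intro t
  induction t using Multiset.induction with
  | empty =>
      intro _
      simp only [Multiset.map_zero, Multiset.prod_zero, Multiset.card_zero, pow_zero,
        Ideal.one_eq_top]
      exact Submodule.mem_top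
  | cons a t ih =>
      intro hmem
      rw [Multiset.map_cons, Multiset.prod_cons, Multiset.card_cons, pow_succ']
      exact Ideal.mul_mem_mul (hmem a (Multiset.mem_cons_self a t))
        (ih fun i hi => hmem i (Multiset.mem_cons_of_mem hi))

lemma prod_multiset_X (d : ℕ →₀ ℕ) :
    ((Finsupp.toMultiset d).map (X : ℕ → MvPolynomial ℕ k)).prod = monomial d 1 := by
  rw [Finsupp.toMultiset_map, Finsupp.prod_toMultiset, monomial_eq, C_1, one_mul]
  rw [Finsupp.prod_mapDomain_index (fun b => pow_zero b)
    (fun b m1 m2 => pow_add b m1 m2)]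

lemma monoC {θ : ℕ → ℕ → MvPolynomial ℕ k} {n : ℕ}
    (hroot : ∀ m : ℕ, Even m → θ m 0 = theta0 k m)
    (hcable : ∀ m : ℕ, Even m → ∀ j : ℕ, downOp k (θ m (j + 1)) = θ m j)
    (hhom : ∀ m : ℕ, Even m → ∀ j : ℕ, θ m j ∈ quadSpace k (m + j))
    (hne : Even n) (hn2 : 2 ≤ n) (r : ℕ) :
    ∀ b : ℕ, ∀ m : Multiset ℕ, Multiset.card m = r →
      Multiset.card (m.filter (fun i => n / 2 ≤ i)) ≤ b →
      ((m.map (X : ℕ → MvPolynomial ℕ k)).prod) ∈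
        (Ideal.span {q : MvPolynomial ℕ k | ∃ i < n / 2, q = X i}) ^ (r - 1) ⊔
          Ideal.span {q : MvPolynomial ℕ k | ∃ m j : ℕ, Even m ∧ n ≤ m ∧ q = θ m j} := by
  classical
  obtain ⟨w0, hw0⟩ := hne
  set I : Ideal (MvPolynomial ℕ k) := Ideal.span {q : MvPolynomial ℕ k | ∃ i < n / 2, q = X i}
    with hI
  set Q : Ideal (MvPolynomial ℕ k) :=
    Ideal.span {q : MvPolynomial ℕ k | ∃ m j : ℕ, Even m ∧ n ≤ m ∧ q = θ m j} with hQ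
  have hsmallcase : ∀ m : Multiset ℕ, Multiset.card m = r →
      Multiset.card (m.filter (fun i => n / 2 ≤ i)) ≤ 1 →
      ((m.map (X : ℕ → MvPolynomial ℕ k)).prod) ∈ I ^ (r - 1) ⊔ Q := by
    intro m hcard hfil
    have hsplit := Multiset.filter_add_not (fun i => n / 2 ≤ i) m
    have hprod : ((m.map (X : ℕ → MvPolynomial ℕ k)).prod)
        = ((m.filter (fun i => n / 2 ≤ i)).map (X : ℕ → MvPolynomial ℕ k)).prod *
          ((m.filter (fun i => ¬ n / 2 ≤ i)).map (X : ℕ → MvPolynomial ℕ k)).prod := by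
      conv_lhs => rw [← hsplit]
      rw [Multiset.map_add, Multiset.prod_add]
    have hsmem : ((m.filter (fun i => ¬ n / 2 ≤ i)).map (X : ℕ → MvPolynomial ℕ k)).prod
        ∈ I ^ Multiset.card (m.filter (fun i => ¬ n / 2 ≤ i)) := by
      refine prod_mem_pow _ fun i hi => ?_
      have hi' := Multiset.of_mem_filter hi
      exact Ideal.subset_span ⟨i, by omega, rfl⟩
    have hcards : Multiset.card (m.filter (fun i => n / 2 ≤ i))
        + Multiset.card (m.filter (fun i => ¬ n / 2 ≤ i)) = r := by
      rw [← Multiset.card_add, hsplit, hcard]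
    have hle : r - 1 ≤ Multiset.card (m.filter (fun i => ¬ n / 2 ≤ i)) := by omega
    have : ((m.filter (fun i => ¬ n / 2 ≤ i)).map (X : ℕ → MvPolynomial ℕ k)).prod
        ∈ I ^ (r - 1) := Ideal.pow_le_pow_right hle hsmem
    refine Submodule.mem_sup_left ?_
    rw [hprod]
    exact Ideal.mul_mem_left _ _ this
  intro b
  induction b with
  | zero =>
      intro m hcard hfil
      exact hsmallcase m hcard (by omega)
  | succ b ih =>
      intro m hcard hfil
      by_cases hfil1 : Multiset.card (m.filter (fun i => n / 2 ≤ i)) ≤ 1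
      · exact hsmallcase m hcard hfil1
      push_neg at hfil1
      obtain ⟨a, ha⟩ := Multiset.card_pos_iff_exists_mem.mp
        (show 0 < Multiset.card (m.filter (fun i => n / 2 ≤ i)) by omega)
      have hax := Multiset.mem_filter.mp ha
      have hm1eq : a ::ₘ m.erase a = m := Multiset.cons_erase hax.1
      have hc2 : Multiset.card (m.filter (fun i => n / 2 ≤ i))
          = Multiset.card ((m.erase a).filter (fun i => n / 2 ≤ i)) + 1 := by
        conv_lhs => rw [← hm1eq]
        rw [Multiset.filter_cons_of_pos (p := fun i => n / 2 ≤ i) _ hax.2, Multiset.card_cons]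
      obtain ⟨b', hb'⟩ := Multiset.card_pos_iff_exists_mem.mp
        (show 0 < Multiset.card ((m.erase a).filter (fun i => n / 2 ≤ i)) by omega)
      have hbx := Multiset.mem_filter.mp hb'
      have hm2eq : b' ::ₘ (m.erase a).erase b' = m.erase a := Multiset.cons_erase hbx.1
      set m2 := (m.erase a).erase b' with hm2
      have hcard2 : Multiset.card m2 + 2 = r := by
        have : Multiset.card m = Multiset.card m2 + 2 := by
          conv_lhs => rw [← hm1eq, ← hm2eq]
          rw [Multiset.card_cons, Multiset.card_cons]
        omega
      have hfilm2 : Multiset.card (m2.filter (fun i => n / 2 ≤ i)) + 2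
          = Multiset.card (m.filter (fun i => n / 2 ≤ i)) := by
        conv_rhs => rw [← hm1eq, ← hm2eq]
        rw [Multiset.filter_cons_of_pos (p := fun i => n / 2 ≤ i) _ hax.2, Multiset.filter_cons_of_pos (p := fun i => n / 2 ≤ i) _ hbx.2,
          Multiset.card_cons, Multiset.card_cons]
      have hprodm : ((m.map (X : ℕ → MvPolynomial ℕ k)).prod)
          = (X a * X b') * ((m2.map (X : ℕ → MvPolynomial ℕ k)).prod) := by
        conv_lhs => rw [← hm1eq, ← hm2eq]
        rw [Multiset.map_cons, Multiset.map_cons, Multiset.prod_cons, Multiset.prod_cons,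
          mul_assoc]
      have hmin : (X a * X b' : MvPolynomial ℕ k)
          = X (min a b') * X (a + b' - min a b') := by
        rcases le_total a b' with hc | hc
        · rw [min_eq_left hc, show a + b' - a = b' by omega]
        · rw [min_eq_right hc, show a + b' - b' = a by omega, mul_comm]
      have hsn : n ≤ a + b' := by
        have h1 := hax.2
        have h2 := hbx.2
        omega
      have hmem : (X (min a b') * X (a + b' - min a b') : MvPolynomial ℕ k)
          ∈ lowSpan k (n / 2) (a + b') ⊔ QdegSpan θ n (a + b') :=
        stepA hroot hcable hhom ⟨w0, hw0⟩ hn2 (a + b') hsn (mem_quadSpace (by omega))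
      obtain ⟨u', hu', v, hv, huv⟩ := Submodule.mem_sup.mp hmem
      have hv' : v * ((m2.map (X : ℕ → MvPolynomial ℕ k)).prod) ∈ I ^ (r - 1) ⊔ Q := by
        apply Submodule.mem_sup_right
        refine Ideal.mul_mem_right _ _ ?_
        have hle : QdegSpan θ n (a + b') ≤ Submodule.restrictScalars k Q := by
          refine Submodule.span_le.mpr ?_
          rintro x ⟨m', hm'e, hm'n, hm's, rfl⟩
          exact Ideal.subset_span ⟨m', a + b' - m', hm'e, hm'n, rfl⟩
        exact hle hv
      have hmul : ∀ w : MvPolynomial ℕ k, w ∈ lowSpan k (n / 2) (a + b') →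
          w * ((m2.map (X : ℕ → MvPolynomial ℕ k)).prod) ∈ I ^ (r - 1) ⊔ Q := by
        intro w hw
        induction hw using Submodule.span_induction with
        | mem x hx =>
            obtain ⟨i, hi, rfl⟩ := hx
            have hxp : (X i * X (a + b' - i)) * ((m2.map (X : ℕ → MvPolynomial ℕ k)).prod)
                = (((i ::ₘ (a + b' - i) ::ₘ m2)).map (X : ℕ → MvPolynomial ℕ k)).prod := by
              rw [Multiset.map_cons, Multiset.map_cons, Multiset.prod_cons,
                Multiset.prod_cons, mul_assoc]
            rw [hxp]
            apply ih
            · rw [Multiset.card_cons, Multiset.card_cons]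
              omega
            · have hfi : ¬ (n / 2 ≤ i) := by omega
              rw [Multiset.filter_cons_of_neg (p := fun i => n / 2 ≤ i) _ hfi]
              by_cases hsi : n / 2 ≤ a + b' - i
              · rw [Multiset.filter_cons_of_pos (p := fun i => n / 2 ≤ i) _ hsi, Multiset.card_cons]
                omega
              · rw [Multiset.filter_cons_of_neg (p := fun i => n / 2 ≤ i) _ hsi]
                omega
        | zero =>
            rw [zero_mul]
            exact zero_mem _
        | add x y hx hy ihx ihy =>
            rw [add_mul]
            exact add_mem ihx ihy
        | smul cc x hx ihx =>
            rw [smul_mul_assoc, smul_eq_C_mul]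
            exact Ideal.mul_mem_left _ _ ihx
      rw [hprodm, hmin, ← huv, add_mul]
      exact add_mem (hmul u' hu') hv'

end QProofAux

/-- For `r ≥ 1` and even `n ≥ 2`, every polynomial homogeneous of total degree `r` lies in
`(x₀,...,x_{n/2-1})^{r-1} + Qₙ`, where `Qₙ` is the fundamental `Q`-ideal, generated by the
vertices of homogeneous `Δ`-cables rooted at `θₘ⁽⁰⁾` for even `m ≥ n`. -/
theorem homogeneous_mem_pow_sup_Q (k : Type*) [Field k] [CharZero k]
    (θ : ℕ → ℕ → MvPolynomial ℕ k)
    (hroot : ∀ n : ℕ, Even n → θ n 0 = theta0 k n)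
    (hcable : ∀ n : ℕ, Even n → ∀ j : ℕ, downOp k (θ n (j + 1)) = θ n j)
    (hhom : ∀ n : ℕ, Even n → ∀ j : ℕ, θ n j ∈ quadSpace k (n + j)) :
    ∀ r : ℕ, 1 ≤ r → ∀ n : ℕ, Even n → 2 ≤ n →
      ∀ p : MvPolynomial ℕ k, p.IsHomogeneous r →
        p ∈ (Ideal.span {q : MvPolynomial ℕ k | ∃ i < n / 2, q = X i}) ^ (r - 1) ⊔
          Ideal.span {q : MvPolynomial ℕ k | ∃ m j : ℕ, Even m ∧ n ≤ m ∧ q = θ m j} := by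
  intro r hr n hne hn2 p hp
  rw [MvPolynomial.as_sum p]
  refine Submodule.sum_mem _ fun d hd => ?_
  have hmono : (monomial d (coeff d p) : MvPolynomial ℕ k)
      = C (coeff d p) * monomial d 1 := by
    rw [← MvPolynomial.smul_eq_C_mul, smul_monomial, smul_eq_mul, mul_one]
  rw [hmono]
  apply Ideal.mul_mem_left
  rw [← QProofAux.prod_multiset_X d]
  have hcardeq : Multiset.card (Finsupp.toMultiset d) = r := by
    have hw := hp (MvPolynomial.mem_support_iff.mp hd)
    rw [Finsupp.card_toMultiset, ← hw, Finsupp.weight_apply]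
    simp [Finsupp.sum]
  exact QProofAux.monoC hroot hcable hhom hne hn2 r
    (Multiset.card ((Finsupp.toMultiset d).filter (fun i => n / 2 ≤ i)))
    (Finsupp.toMultiset d) hcardeq le_rfl
end
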